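/- For each τ∈T^{n−l}_𝐧 there is a unique pair (k,r) with k∈{1,…,l}, r∈{1,…,n_k−1} such that τ(b_{k−1}+r)=n−l, and the map τ ↦ s_{n−l}∘τ is a bijection from T^{n−l}_𝐧 onto the disjoint union over k,r of T^{n−l−1}_{𝐧[k,r]}. Moreover sgn_{𝐧[k,r]}(s_{n−l}τ) = (−1)^{n−l−b_{k−1}−r+k−1}·sgn_𝐧(τ). -/

import Mathlib

/-- Partial sums `b_k = n₁ + ⋯ + n_k` of a sequence of block sizes. -/
def bs {L : ℕ} (dims : Fin L → ℕ) (k : ℕ) : ℕ :=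
  ∑ j ∈ Finset.univ.filter (fun j : Fin L => (j : ℕ) < k), dims j

/-- `τ ∈ T^d_𝐧` (1-indexed positions `p = (i:ℕ)+1`): values in `{0,…,d+1}`,
every value in `{1,…,d}` is attained, and the value at each interior cut point
`b_j` (`1 ≤ j ≤ L−1`) of the partition `dims` is `d+1`. -/
def TD {m L : ℕ} (dims : Fin L → ℕ) (d : ℕ) (τ : Fin m → ℕ) : Prop :=
  (∀ i, τ i ≤ d + 1) ∧
  (∀ j : ℕ, 1 ≤ j → j ≤ d → ∃ i, τ i = j) ∧
  (∀ (i : Fin m) (j : ℕ), 1 ≤ j → j + 1 ≤ L → (i : ℕ) + 1 = bs dims j → τ i = d + 1)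

/-- The data computing `sgn_𝐧(τ)`: `ϱ` is the increasing bijection from
`{1,…,d}` onto the non-cut positions, and `π = τ ∘ ϱ` viewed as a permutation
of `{1,…,d}` (0-indexed: `τ(ϱ(j)) = π(j)+1`). Then `sgn_𝐧(τ) = sgn(π)`. -/
def SgnData {m L d : ℕ} (dims : Fin L → ℕ) (τ : Fin m → ℕ)
    (ϱ : Fin d → Fin m) (π : Equiv.Perm (Fin d)) : Prop :=
  StrictMono ϱ ∧
  (∀ i : Fin m, i ∈ Set.range ϱ ↔ ∀ j : ℕ, 1 ≤ j → j + 1 ≤ L → (i : ℕ) + 1 ≠ bs dims j) ∧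
  (∀ j, τ (ϱ j) = (π j : ℕ) + 1)

/-- The refined partition `𝐧[k,r]`. -/
def refine {l : ℕ} (dims : Fin (l + 1) → ℕ) (k : Fin (l + 1)) (r : ℕ) :
    Fin (l + 2) → ℕ :=
  Fin.insertNth k.succ (dims k - r) (Function.update dims k r)

namespace Stmt17
open Finset Equiv

section basic
variable {L : ℕ} {dims : Fin L → ℕ}

lemma bs_zero : bs dims 0 = 0 := by simp [bs]

lemma bs_mono : Monotone (bs dims) := by
  intro a b hab
  exact Finset.sum_le_sum_of_subset (by
    intro j hj; simp only [mem_filter, mem_univ, true_and] at *; omega)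

lemma bs_succ (k : ℕ) (h : k < L) :
    bs dims (k + 1) = bs dims k + dims ⟨k, h⟩ := by
  have hins : Finset.univ.filter (fun j : Fin L => (j : ℕ) < k + 1) =
      insert (⟨k, h⟩ : Fin L) (Finset.univ.filter (fun j : Fin L => (j : ℕ) < k)) := by
    ext j
    simp only [mem_filter, mem_insert, mem_univ, true_and, Fin.ext_iff]
    omega
  rw [bs, hins, Finset.sum_insert (by simp), bs]
  ring

lemma bs_of_le (k : ℕ) (h : L ≤ k) : bs dims k = ∑ j, dims j := by
  rw [bs]; congr 1
  ext j; simp only [mem_filter, mem_univ, true_and, iff_true]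
  exact lt_of_lt_of_le j.isLt h

lemma bs_strict (hd : ∀ j, 0 < dims j) {a b : ℕ} (hab : a < b) (hb : b ≤ L) :
    bs dims a < bs dims b := by
  have ha : a < L := lt_of_lt_of_le hab hb
  have h1 : bs dims a < bs dims (a + 1) := by
    rw [bs_succ a ha]; have := hd ⟨a, ha⟩; omega
  exact lt_of_lt_of_le h1 (bs_mono hab)

lemma self_le_bs (hd : ∀ j, 0 < dims j) (a : ℕ) (ha : a ≤ L) : a ≤ bs dims a := by
  induction a with
  | zero => simp [bs_zero]
  | succ n ih =>
    have hn : n < L := ha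
    rw [bs_succ n hn]
    have := hd ⟨n, hn⟩
    have := ih (le_of_lt hn)
    omega


end basic

/-- `i` is a non-cut position. -/
def NC {m L : ℕ} (dims : Fin L → ℕ) (i : Fin m) : Prop :=
  ∀ j : ℕ, 1 ≤ j → j + 1 ≤ L → (i : ℕ) + 1 ≠ bs dims j

section decomp
variable {L : ℕ} {dims : Fin (L + 1) → ℕ}

lemma decomp (hd : ∀ j, 0 < dims j) (p : ℕ) (h1 : 1 ≤ p) (h2 : p < bs dims (L + 1))
    (hnc : ∀ j : ℕ, 1 ≤ j → j ≤ L → p ≠ bs dims j) :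
    ∃ k : Fin (L + 1), ∃ r : ℕ, 0 < r ∧ r < dims k ∧ p = bs dims (k : ℕ) + r := by
  set K := Nat.findGreatest (fun j => bs dims j < p) L with hK
  have hKle : K ≤ L := Nat.findGreatest_le L
  have hK0 : bs dims K < p :=
    Nat.findGreatest_spec (P := fun j => bs dims j < p) (Nat.zero_le L)
      (by show bs dims 0 < p; rw [bs_zero]; omega)
  have hK1 : p < bs dims (K + 1) := by
    rcases eq_or_lt_of_le hKle with h | h
    · rw [h]; exact h2
    · have hnot : ¬ (bs dims (K + 1) < p) :=
        Nat.findGreatest_is_greatest (P := fun j => bs dims j < p) (n := L)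
          (by rw [← hK]; omega) h
      have hne : p ≠ bs dims (K + 1) := hnc (K + 1) (by omega) h
      omega
  refine ⟨⟨K, by omega⟩, p - bs dims K, by omega, ?_, by simp; omega⟩
  rw [bs_succ K (by omega)] at hK1
  omega

lemma decomp_unique {k k' : Fin (L + 1)} {r r' : ℕ}
    (hr : 0 < r) (hrk : r < dims k) (hr' : 0 < r') (hrk' : r' < dims k')
    (h : bs dims (k : ℕ) + r = bs dims (k' : ℕ) + r') : k = k' ∧ r = r' := by
  have key : ∀ a a' : Fin (L + 1), ∀ b b' : ℕ, 0 < b → b < dims a → 0 < b' →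
      bs dims (a : ℕ) + b = bs dims (a' : ℕ) + b' → ¬ ((a : ℕ) < (a' : ℕ)) := by
    intro a a' b b' hb hba hb' heq hlt
    have h1 : bs dims ((a : ℕ) + 1) ≤ bs dims (a' : ℕ) := bs_mono (by omega)
    have h2 : bs dims ((a : ℕ) + 1) = bs dims (a : ℕ) + dims a := by
      rw [bs_succ (a : ℕ) a.isLt]
    omega
  have h1 := key k k' r r' hr hrk hr' h
  have h2 := key k' k r' r hr' hrk' hr h.symm
  have hkk : k = k' := by
    apply Fin.ext; omega
  subst hkk
  exact ⟨rfl, by omega⟩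

lemma newcut_ne (hd : ∀ j, 0 < dims j) (k : Fin (L + 1)) (r : ℕ) (hr : 0 < r)
    (hrk : r < dims k) :
    ∀ j : ℕ, 1 ≤ j → j ≤ L → bs dims (k : ℕ) + r ≠ bs dims j := by
  intro j hj1 hj2 heq
  rcases le_or_gt j (k : ℕ) with h | h
  · have : bs dims j ≤ bs dims (k : ℕ) := bs_mono h
    omega
  · have h1 : bs dims ((k : ℕ) + 1) ≤ bs dims j := bs_mono (by omega)
    have h2 : bs dims ((k : ℕ) + 1) = bs dims (k : ℕ) + dims k := by
      rw [bs_succ (k : ℕ) k.isLt]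
    omega

end decomp

section main
variable {L m d : ℕ} {dims : Fin (L + 1) → ℕ} {τ : Fin m → ℕ}

/-- The key counting lemma. -/
lemma main_count (hd : ∀ j, 0 < dims j) (hsum : ∑ j, dims j = m + 1)
    (hm : m + 1 = d + (L + 1)) (hτ : TD dims d τ) :
    (∀ i : Fin m, NC dims i → 1 ≤ τ i ∧ τ i ≤ d) ∧
    (∀ i i' : Fin m, NC dims i → NC dims i' → τ i = τ i' → i = i') := by
  classical
  set S : Finset (Fin m) := Finset.univ.filter (fun i => NC dims i) with hS
  have hbsL : bs dims (L + 1) = m + 1 := by rw [bs_of_le (L + 1) le_rfl, hsum]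
  -- card of the complement is L
  have hbsub : ∀ j : ℕ, 1 ≤ j → j ≤ L → 1 ≤ bs dims j ∧ bs dims j ≤ m := by
    intro j hj1 hj2
    constructor
    · exact le_trans hj1 (self_le_bs hd j (by omega))
    · have h1 : bs dims j ≤ bs dims L := bs_mono hj2
      have h2 : bs dims L < bs dims (L + 1) := bs_strict hd (by omega) le_rfl
      omega
  have hcompl : (Finset.univ.filter (fun i : Fin m => ¬ NC dims i)).card = L := by
    have hc : (Finset.Icc 1 L).card =
        (Finset.univ.filter (fun i : Fin m => ¬ NC dims i)).card := by
      apply Finset.card_bij (fun j hj =>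
        (⟨bs dims j - 1, by
          have hj' := Finset.mem_Icc.mp hj
          have := hbsub j hj'.1 hj'.2
          omega⟩ : Fin m))
      · intro j hj
        have hj' := Finset.mem_Icc.mp hj
        have hb := hbsub j hj'.1 hj'.2
        simp only [Finset.mem_filter, Finset.mem_univ, true_and]
        intro hnc
        exact hnc j hj'.1 (by omega) (by simp; omega)
      · intro a ha a' ha' heq
        have ha1 := Finset.mem_Icc.mp ha
        have ha2 := Finset.mem_Icc.mp ha'
        have hb := hbsub a ha1.1 ha1.2
        have hb' := hbsub a' ha2.1 ha2.2
        have hval : bs dims a = bs dims a' := by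
          simp only [Fin.mk.injEq] at heq
          omega
        by_contra hne
        rcases Nat.lt_or_ge a a' with h | h
        · exact absurd hval (ne_of_lt (bs_strict hd h (by omega)))
        · have : a' < a := by omega
          exact absurd hval.symm (ne_of_lt (bs_strict hd this (by omega)))
      · intro i hi
        rw [Finset.mem_filter] at hi
        simp only [Finset.mem_univ, true_and, NC] at hi
        push_neg at hi
        obtain ⟨j, hj1, hj2, hj3⟩ := hi
        exact ⟨j, Finset.mem_Icc.mpr ⟨hj1, by omega⟩, by apply Fin.ext; simp; omega⟩
    rw [← hc, Nat.card_Icc]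
    omega
  have hScard : S.card = d := by
    rw [hS]
    have := Finset.card_filter_add_card_filter_not
      (s := Finset.univ (α := Fin m)) (p := fun i => NC dims i)
    rw [hcompl, Finset.card_univ, Fintype.card_fin] at this
    omega
  -- the image of S under τ is exactly Icc 1 d
  have himg : S.image τ = Finset.Icc 1 d := by
    have hsub : Finset.Icc 1 d ⊆ S.image τ := by
      intro v hv
      have hv' := Finset.mem_Icc.mp hv
      obtain ⟨i, hi⟩ := hτ.2.1 v hv'.1 hv'.2
      refine Finset.mem_image.mpr ⟨i, ?_, hi⟩
      rw [hS, Finset.mem_filter]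
      refine ⟨Finset.mem_univ _, ?_⟩
      intro j hj1 hj2 hj3
      have := hτ.2.2 i j hj1 hj2 hj3
      omega
    have hcard : (S.image τ).card ≤ (Finset.Icc 1 d).card := by
      rw [Nat.card_Icc, show d + 1 - 1 = d from rfl, ← hScard]
      exact Finset.card_image_le
    exact (Finset.eq_of_subset_of_card_le hsub hcard).symm
  have hmemS : ∀ i : Fin m, NC dims i → i ∈ S := by
    intro i hi; rw [hS, Finset.mem_filter]; exact ⟨Finset.mem_univ _, hi⟩
  constructor
  · intro i hi
    have : τ i ∈ S.image τ := Finset.mem_image_of_mem τ (hmemS i hi)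
    rw [himg, Finset.mem_Icc] at this
    exact this
  · intro i i' hi hi' heq
    have hinj : Set.InjOn τ S := by
      apply Finset.injOn_of_card_image_eq
      rw [himg, Nat.card_Icc, hScard]
      omega
    exact hinj (hmemS i hi) (hmemS i' hi') heq

lemma tau_top_iff (hd : ∀ j, 0 < dims j) (hsum : ∑ j, dims j = m + 1)
    (hm : m + 1 = d + (L + 1)) (hτ : TD dims d τ) (i : Fin m) :
    τ i = d + 1 ↔ ¬ NC dims i := by
  constructor
  · intro hi hnc
    have := (main_count hd hsum hm hτ).1 i hnc
    omega
  · intro hnc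
    rw [NC] at hnc; push_neg at hnc
    obtain ⟨j, hj1, hj2, hj3⟩ := hnc
    exact hτ.2.2 i j hj1 hj2 hj3

end main

section refine
variable {l : ℕ} {dims : Fin (l + 1) → ℕ} {k : Fin (l + 1)} {r : ℕ}

lemma refine_castSucc_lt (i : Fin (l + 1)) (h : i < k) :
    refine dims k r i.castSucc = dims i := by
  rw [refine, show i.castSucc = k.succ.succAbove i from
    (Fin.succAbove_of_castSucc_lt _ _ (by simp [Fin.castSucc_lt_succ_iff]; exact le_of_lt h)).symm,
    Fin.insertNth_apply_succAbove]
  exact Function.update_of_ne (ne_of_lt h) _ _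

lemma refine_castSucc_self : refine dims k r k.castSucc = r := by
  rw [refine, show k.castSucc = k.succ.succAbove k from
    (Fin.succAbove_of_castSucc_lt _ _ (by simp [Fin.castSucc_lt_succ_iff])).symm,
    Fin.insertNth_apply_succAbove]
  exact Function.update_self _ _ _

lemma refine_succ_self : refine dims k r k.succ = dims k - r := by
  rw [refine, Fin.insertNth_apply_same]

lemma refine_succ_gt (i : Fin (l + 1)) (h : k < i) :
    refine dims k r i.succ = dims i := by
  rw [refine, show i.succ = k.succ.succAbove i from
    (Fin.succAbove_of_le_castSucc _ _ (by simp [Fin.succ_le_castSucc_iff]; exact h)).symm,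
    Fin.insertNth_apply_succAbove]
  exact Function.update_of_ne (ne_of_gt h) _ _

lemma bs_refine_le (j : ℕ) (hj : j ≤ (k : ℕ)) :
    bs (refine dims k r) j = bs dims j := by
  induction j with
  | zero => rw [bs_zero, bs_zero]
  | succ n ih =>
    have hn : n < (k : ℕ) := hj
    have hn1 : n < l + 1 := lt_trans hn k.isLt
    rw [bs_succ n (by omega), bs_succ n hn1, ih (by omega),
      show (⟨n, by omega⟩ : Fin (l + 2)) = (⟨n, hn1⟩ : Fin (l + 1)).castSucc from rfl,
      refine_castSucc_lt ⟨n, hn1⟩ hn]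

lemma bs_refine_mid : bs (refine dims k r) ((k : ℕ) + 1) = bs dims (k : ℕ) + r := by
  rw [bs_succ (k : ℕ) (by omega), bs_refine_le (k : ℕ) le_rfl,
    show (⟨(k : ℕ), by omega⟩ : Fin (l + 2)) = k.castSucc from rfl, refine_castSucc_self]

lemma bs_refine_gt (hrk : r ≤ dims k) (j : ℕ) (hj : (k : ℕ) + 1 ≤ j) (hj2 : j ≤ l + 1) :
    bs (refine dims k r) (j + 1) = bs dims j := by
  induction j, hj using Nat.le_induction with
  | base =>
    rw [bs_succ ((k : ℕ) + 1) (by omega), bs_refine_mid,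
      show (⟨(k : ℕ) + 1, by omega⟩ : Fin (l + 2)) = k.succ from rfl, refine_succ_self,
      bs_succ (k : ℕ) k.isLt]
    simp only [Fin.eta]
    omega
  | succ n hn ih =>
    have hn1 : n < l + 1 := by omega
    rw [bs_succ (n + 1) (by omega), ih (by omega), bs_succ n hn1,
      show (⟨n + 1, by omega⟩ : Fin (l + 2)) = (⟨n, hn1⟩ : Fin (l + 1)).succ from rfl,
      refine_succ_gt ⟨n, hn1⟩ (by simp [Fin.lt_def]; omega)]

/-- Non-cut positions of the refined partition. -/
lemma NC_refine_iff {m : ℕ} (hd : ∀ j, 0 < dims j) (hr : 0 < r) (hrk' : r < dims k)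
    (i : Fin m) :
    NC (refine dims k r) i ↔ NC dims i ∧ (i : ℕ) + 1 ≠ bs dims (k : ℕ) + r := by
  have hrk : r ≤ dims k := le_of_lt hrk'
  constructor
  · intro h
    refine ⟨?_, ?_⟩
    · intro j hj1 hj2 heq
      rcases le_or_gt j (k : ℕ) with hle | hlt
      · exact h j hj1 (by omega) (by rw [bs_refine_le j hle]; exact heq)
      · exact h (j + 1) (by omega) (by omega)
          (by rw [bs_refine_gt hrk j (by omega) (by omega)]; exact heq)
    · intro heq
      exact h ((k : ℕ) + 1) (by omega) (by omega) (by rw [bs_refine_mid]; exact heq)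
  · rintro ⟨h1, h2⟩ j hj1 hj2 heq
    rcases lt_trichotomy j ((k : ℕ) + 1) with hlt | heq' | hgt
    · rw [bs_refine_le j (by omega)] at heq
      exact h1 j hj1 (by omega) heq
    · rw [heq', bs_refine_mid] at heq
      exact h2 heq
    · obtain ⟨j', rfl⟩ : ∃ j', j = j' + 1 := ⟨j - 1, by omega⟩
      rw [bs_refine_gt hrk j' (by omega) (by omega)] at heq
      exact h1 j' (by omega) (by omega) heq

lemma refine_pos (hd : ∀ j, 0 < dims j) (hr : 0 < r) (hrk' : r < dims k) :
    ∀ j, 0 < refine dims k r j := by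
  intro j
  rcases eq_or_ne j k.succ with rfl | hne
  · rw [refine_succ_self]; omega
  · obtain ⟨t, rfl⟩ := Fin.exists_succAbove_eq hne
    rw [refine]
    simp only [Fin.insertNth_apply_succAbove]
    rcases eq_or_ne t k with rfl | h2
    · rw [Function.update_self]; exact hr
    · rw [Function.update_of_ne h2]; exact hd t

lemma refine_sum (hrk : r ≤ dims k) :
    ∑ j, refine dims k r j = ∑ j, dims j := by
  rw [refine, Fin.sum_univ_succAbove _ k.succ, Fin.insertNth_apply_same]
  simp only [Fin.insertNth_apply_succAbove]
  rw [Finset.sum_update_of_mem (Finset.mem_univ k),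
    ← Finset.add_sum_erase _ dims (Finset.mem_univ k)]
  simp only [Finset.sdiff_singleton_eq_erase]
  omega

end refine

lemma units_pow_parity (a b : ℕ) (h : a % 2 = b % 2) : ((-1 : ℤˣ)) ^ a = (-1) ^ b := by
  rcases Nat.even_or_odd a with ha | ha
  · have hb : Even b := by rw [Nat.even_iff] at *; omega
    rw [Even.neg_one_pow ha, Even.neg_one_pow hb]
  · have hb : Odd b := by rw [Nat.odd_iff] at *; omega
    rw [Odd.neg_one_pow ha, Odd.neg_one_pow hb]

def lastEquiv (e : ℕ) : Fin e ≃ {x : Fin (e + 1) // (x : ℕ) < e} where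
  toFun j := ⟨j.castSucc, j.isLt⟩
  invFun x := ⟨(x : Fin (e + 1)), x.2⟩
  left_inv j := rfl
  right_inv x := by apply Subtype.ext; apply Fin.ext; rfl

lemma pi_decomp (e : ℕ) (π : Equiv.Perm (Fin (e + 1))) (π' : Equiv.Perm (Fin e))
    (j₀ : Fin (e + 1)) (hlast : π j₀ = Fin.last e)
    (hrest : ∀ t : Fin e, (π (j₀.succAbove t) : ℕ) = (π' t : ℕ)) :
    Equiv.Perm.sign π = (-1) ^ (e - (j₀ : ℕ)) * Equiv.Perm.sign π' := by
  classical
  set E : Equiv.Perm (Fin (e + 1)) := π'.extendDomain (lastEquiv e) with hE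
  set C : Equiv.Perm (Fin (e + 1)) :=
    Fin.revPerm * (Fin.cycleRange j₀.rev) * Fin.revPerm with hC
  have hext_cast : ∀ t : Fin e, E t.castSucc = (π' t).castSucc := fun t =>
    Equiv.Perm.extendDomain_apply_image π' (lastEquiv e) t
  have hext_last : E (Fin.last e) = Fin.last e := by
    apply Equiv.Perm.extendDomain_apply_not_subtype
    simp [Fin.last]
  have hπeq : π = E * C := by
    apply Equiv.ext
    intro x
    rcases eq_or_ne x j₀ with rfl | hx
    · have hc : C x = Fin.last e := by
        rw [hC]
        simp only [Equiv.Perm.mul_apply, Fin.revPerm_apply, Fin.cycleRange_self]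
        exact Fin.rev_zero e
      rw [Equiv.Perm.mul_apply, hc, hext_last, hlast]
    · obtain ⟨t, rfl⟩ := Fin.exists_succAbove_eq (Ne.symm hx).symm
      have hc : C (j₀.succAbove t) = t.castSucc := by
        rw [hC]
        simp only [Equiv.Perm.mul_apply, Fin.revPerm_apply]
        rw [Fin.rev_succAbove, Fin.cycleRange_succAbove, Fin.rev_succ, Fin.rev_rev]
      rw [Equiv.Perm.mul_apply, hc, hext_cast]
      apply Fin.ext
      rw [hrest t]
      rfl
  have hsignC : Equiv.Perm.sign C = (-1) ^ (e - (j₀ : ℕ)) := by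
    rw [hC, map_mul, map_mul, Fin.sign_cycleRange]
    have : (Fin.rev j₀ : ℕ) = e - (j₀ : ℕ) := by
      rw [Fin.val_rev]; omega
    rw [this]
    have h2 : Equiv.Perm.sign (Fin.revPerm (n := e + 1)) *
        Equiv.Perm.sign (Fin.revPerm (n := e + 1)) = 1 := Int.units_mul_self _
    calc Equiv.Perm.sign Fin.revPerm * (-1) ^ (e - (j₀ : ℕ)) *
          Equiv.Perm.sign Fin.revPerm
        = (Equiv.Perm.sign Fin.revPerm * Equiv.Perm.sign Fin.revPerm) *
          (-1) ^ (e - (j₀ : ℕ)) := by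
          rw [mul_assoc, mul_comm ((-1 : ℤˣ) ^ (e - (j₀ : ℕ))), ← mul_assoc]
      _ = (-1) ^ (e - (j₀ : ℕ)) := by rw [h2, one_mul]
  have hsignE : Equiv.Perm.sign E = Equiv.Perm.sign π' := by
    rw [hE]
    exact Equiv.Perm.sign_extendDomain π' (lastEquiv e)
  rw [hπeq, map_mul, hsignE, hsignC, mul_comm]

lemma rho_count {e l : ℕ} {dims : Fin (l + 1) → ℕ} (hd : ∀ j, 0 < dims j)
    (k : Fin (l + 1)) (r : ℕ) (hr : 0 < r) (hrk : r < dims k)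
    (ϱ : Fin (e + 1) → Fin (e + l + 1)) (hmono : StrictMono ϱ)
    (hrange : ∀ i : Fin (e + l + 1), i ∈ Set.range ϱ ↔ NC dims i)
    (j₀ : Fin (e + 1)) (h0 : (ϱ j₀ : ℕ) + 1 = bs dims (k : ℕ) + r) :
    (j₀ : ℕ) + (k : ℕ) + 1 = bs dims (k : ℕ) + r := by
  classical
  have hkl : (k : ℕ) ≤ l := by omega
  have hbk1 : bs dims ((k : ℕ) + 1) = bs dims (k : ℕ) + dims k := by
    rw [bs_succ _ k.isLt]
  have hbs1 : ∀ j' : ℕ, 1 ≤ j' → j' ≤ l + 1 → 1 ≤ bs dims j' := by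
    intro j' h1 h2
    exact le_trans h1 (self_le_bs hd j' h2)
  set B := (Finset.univ.filter (fun t : Fin (e + 1) => ϱ t < ϱ j₀)).image
    (fun t => (ϱ t : ℕ)) with hB
  set C := (Finset.Icc 1 (k : ℕ)).image (fun j' => bs dims j' - 1) with hCdef
  have hBcard : B.card = (j₀ : ℕ) := by
    rw [hB, Finset.card_image_of_injective _
      (fun a b hab => hmono.injective (Fin.val_injective hab))]
    have heq : Finset.univ.filter (fun t : Fin (e + 1) => ϱ t < ϱ j₀) = Finset.Iio j₀ := by
      ext t
      simp [hmono.lt_iff_lt]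
    rw [heq, Fin.card_Iio]
  have hCcard : C.card = (k : ℕ) := by
    rw [hCdef, Finset.card_image_of_injOn, Nat.card_Icc]
    · omega
    · intro a ha b hb heq
      simp only [Finset.coe_Icc, Set.mem_Icc] at ha hb
      have h1 := hbs1 a ha.1 (by omega)
      have h2 := hbs1 b hb.1 (by omega)
      simp only at heq
      by_contra hne
      rcases Nat.lt_or_ge a b with h | h
      · have := bs_strict hd h (show b ≤ l + 1 by omega); omega
      · have hba : b < a := by omega
        have := bs_strict hd hba (show a ≤ l + 1 by omega); omega
  have hunion : Finset.range ((ϱ j₀ : ℕ)) = B ∪ C := by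
    ext p
    simp only [Finset.mem_range, Finset.mem_union]
    constructor
    · intro hp
      have hpm : p < e + l + 1 := lt_trans hp (ϱ j₀).isLt
      set i : Fin (e + l + 1) := ⟨p, hpm⟩ with hi
      by_cases hnc : NC dims i
      · obtain ⟨t, ht⟩ := (hrange i).mpr hnc
        left
        rw [hB]
        refine Finset.mem_image.mpr ⟨t, ?_, by rw [ht]⟩
        rw [Finset.mem_filter]
        refine ⟨Finset.mem_univ _, ?_⟩
        rw [Fin.lt_def, ht]
        exact hp
      · rw [NC] at hnc
        push_neg at hnc
        obtain ⟨j, hj1, hj2, hj3⟩ := hnc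
        right
        rw [hCdef]
        refine Finset.mem_image.mpr ⟨j, Finset.mem_Icc.mpr ⟨hj1, ?_⟩, by have : (i : ℕ) = p := (by rw [hi]); omega⟩
        by_contra hjk
        have hkj : (k : ℕ) + 1 ≤ j := by omega
        have h4 : bs dims ((k : ℕ) + 1) ≤ bs dims j := bs_mono hkj
        simp only [hi] at hj3
        omega
    · intro hp
      rcases hp with hp | hp
      · rw [hB] at hp
        obtain ⟨t, ht, rfl⟩ := Finset.mem_image.mp hp
        rw [Finset.mem_filter] at ht
        exact ht.2
      · rw [hCdef] at hp
        obtain ⟨j', hj', rfl⟩ := Finset.mem_image.mp hp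
        rw [Finset.mem_Icc] at hj'
        have h1 := hbs1 j' hj'.1 (by omega)
        have h2 : bs dims j' ≤ bs dims (k : ℕ) := bs_mono hj'.2
        omega
  have hdisj : Disjoint B C := by
    rw [Finset.disjoint_left]
    intro p hpB hpC
    rw [hB] at hpB
    rw [hCdef] at hpC
    obtain ⟨t, _, rfl⟩ := Finset.mem_image.mp hpB
    obtain ⟨j', hj', hj'eq⟩ := Finset.mem_image.mp hpC
    rw [Finset.mem_Icc] at hj'
    have hnc : NC dims (ϱ t) := (hrange (ϱ t)).mp ⟨t, rfl⟩
    have h1 := hbs1 j' hj'.1 (by omega)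
    exact hnc j' hj'.1 (by omega) (by omega)
  have hcard := congrArg Finset.card hunion
  rw [Finset.card_range, Finset.card_union_of_disjoint hdisj, hBcard, hCcard] at hcard
  omega
end Stmt17

open Stmt17

/-- For `τ ∈ T^{n−l}_𝐧` (here `n = e+l+2`, `l(𝐧) = l+1`,
`n − l(𝐧) = e+1`): there is a unique `(k,r)`, `0 < r < n_k`, with
`τ(b_{k−1}+r) = n−l`; the map `τ ↦ s_{n−l}∘τ` is a bijection onto
`∐_{k,r} T^{n−l−1}_{𝐧[k,r]}`; and
`sgn_{𝐧[k,r]}(s_{n−l}τ) = (−1)^{n−l−b_{k−1}−r+k−1} sgn_𝐧(τ)`. -/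
theorem stmt17 (e l : ℕ) (dims : Fin (l + 1) → ℕ) (hd : ∀ k, 0 < dims k)
    (hsum : ∑ j, dims j = e + l + 2)
    (τ : Fin (e + l + 1) → ℕ) (hτ : TD dims (e + 1) τ) :
    (∃! q : Fin (l + 1) × ℕ, (0 < q.2 ∧ q.2 < dims q.1) ∧
        ∀ i : Fin (e + l + 1), (i : ℕ) + 1 = bs dims (q.1 : ℕ) + q.2 → τ i = e + 1) ∧
    (∀ τ' : Fin (e + l + 1) → ℕ, TD dims (e + 1) τ' →
      (fun i => if τ i ≤ e + 1 then τ i else τ i - 1) =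
        (fun i => if τ' i ≤ e + 1 then τ' i else τ' i - 1) → τ = τ') ∧
    (∀ (k : Fin (l + 1)) (r : ℕ), 0 < r → r < dims k →
      (∀ i : Fin (e + l + 1), (i : ℕ) + 1 = bs dims (k : ℕ) + r → τ i = e + 1) →
      TD (refine dims k r) e (fun i => if τ i ≤ e + 1 then τ i else τ i - 1) ∧
      (∀ (ϱ : Fin (e + 1) → Fin (e + l + 1)) (π : Equiv.Perm (Fin (e + 1)))
          (ϱ' : Fin e → Fin (e + l + 1)) (π' : Equiv.Perm (Fin e)),
        SgnData dims τ ϱ π →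
        SgnData (refine dims k r) (fun i => if τ i ≤ e + 1 then τ i else τ i - 1) ϱ' π' →
        (-1) ^ (bs dims (k : ℕ) + r) * Equiv.Perm.sign π' =
          (-1) ^ (e + 1 + (k : ℕ)) * Equiv.Perm.sign π)) ∧
    (∀ (k : Fin (l + 1)) (r : ℕ), 0 < r → r < dims k →
      ∀ ψ : Fin (e + l + 1) → ℕ, TD (refine dims k r) e ψ →
        ∃ τ' : Fin (e + l + 1) → ℕ, TD dims (e + 1) τ' ∧
          (fun i => if τ' i ≤ e + 1 then τ' i else τ' i - 1) = ψ) := by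
  have hsum' : ∑ j, dims j = (e + l + 1) + 1 := by rw [hsum]
  have hMC := main_count (L := l) (m := e + l + 1) (d := e + 1) hd hsum' (by omega) hτ
  have htop := fun i => tau_top_iff (L := l) (m := e + l + 1) (d := e + 1) hd hsum'
    (by omega) hτ i
  have hbsL1 : bs dims (l + 1) = e + l + 2 := by rw [bs_of_le _ le_rfl, hsum]
  have hbk1 : ∀ k : Fin (l + 1), bs dims ((k : ℕ) + 1) = bs dims (k : ℕ) + dims k := by
    intro k; rw [bs_succ _ k.isLt]
  have hble : ∀ (k : Fin (l + 1)) (r : ℕ), r < dims k →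
      bs dims (k : ℕ) + r ≤ e + l + 1 := by
    intro k r hrk
    have h1 : bs dims ((k : ℕ) + 1) ≤ bs dims (l + 1) := bs_mono (by omega)
    have h2 := hbk1 k
    omega
  refine ⟨?_, ?_, ?_, ?_⟩
  · -- Part 1: existence and uniqueness of (k, r)
    obtain ⟨i₁, hi₁⟩ := hτ.2.1 (e + 1) (by omega) (by omega)
    have hnci₁ : NC dims i₁ := by
      by_contra h
      have := (htop i₁).mpr h
      omega
    obtain ⟨k, r, hr, hrk, hp⟩ := decomp hd ((i₁ : ℕ) + 1) (by omega)
      (by rw [hbsL1]; omega) (fun j hj1 hj2 => hnci₁ j hj1 (by omega))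
    refine ⟨(k, r), ⟨⟨hr, hrk⟩, ?_⟩, ?_⟩
    · intro i hi
      have hi2 : (i : ℕ) + 1 = bs dims (k : ℕ) + r := hi
      have : i = i₁ := by apply Fin.ext; omega
      rw [this]; exact hi₁
    · rintro ⟨k', r'⟩ ⟨⟨hr', hrk'⟩, hq⟩
      have hble' := hble k' r' hrk'
      set i' : Fin (e + l + 1) := ⟨bs dims (k' : ℕ) + r' - 1, by omega⟩ with hi'def
      have hi' : (i' : ℕ) + 1 = bs dims (k' : ℕ) + r' := by
        simp only [hi'def]; omega
      have hτi' : τ i' = e + 1 := hq i' hi'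
      have hnci' : NC dims i' := by
        intro j hj1 hj2 heq
        have := newcut_ne hd k' r' hr' hrk' j hj1 (by omega)
        omega
      have hii : i' = i₁ := hMC.2 i' i₁ hnci' hnci₁ (by rw [hτi', hi₁])
      have hpp : bs dims (k' : ℕ) + r' = bs dims (k : ℕ) + r := by
        rw [← hp, ← hi', hii]
      obtain ⟨hk, hrr⟩ := decomp_unique hr' hrk' hr hrk hpp
      simp only [Prod.mk.injEq]
      exact ⟨hk, hrr⟩
  · -- Part 2: injectivity of the squash map
    intro τ' hτ' hfun
    have hMC' := main_count (L := l) (m := e + l + 1) (d := e + 1) hd hsum' (by omega) hτ'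
    have htop' := fun i => tau_top_iff (L := l) (m := e + l + 1) (d := e + 1) hd hsum'
      (by omega) hτ' i
    funext i
    have h := congrFun hfun i
    by_cases hnc : NC dims i
    · have h1 := hMC.1 i hnc
      have h2 := hMC'.1 i hnc
      rw [if_pos h1.2, if_pos h2.2] at h
      exact h
    · rw [(htop i).mpr hnc, (htop' i).mpr hnc]
  · -- Part 3
    intro k r hr hrk hvk
    have hrk' : r ≤ dims k := le_of_lt hrk
    constructor
    · -- TD of the squashed map
      refine ⟨?_, ?_, ?_⟩
      · intro i
        have := hτ.1 i
        by_cases h : τ i ≤ e + 1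
        · simp only [if_pos h]; omega
        · simp only [if_neg h]; omega
      · intro v hv1 hv2
        obtain ⟨i, hi⟩ := hτ.2.1 v hv1 (by omega)
        exact ⟨i, by simp only [if_pos (show τ i ≤ e + 1 by omega)]; exact hi⟩
      · intro i j hj1 hj2 heq
        simp only
        rcases lt_trichotomy j ((k : ℕ) + 1) with hlt | heq' | hgt
        · rw [bs_refine_le j (by omega)] at heq
          have h2 : τ i = e + 2 := hτ.2.2 i j hj1 (by omega) heq
          rw [if_neg (by omega)]; omega
        · rw [heq', bs_refine_mid] at heq
          have h2 : τ i = e + 1 := hvk i heq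
          rw [if_pos (by omega)]; omega
        · obtain ⟨j', rfl⟩ : ∃ j', j = j' + 1 := ⟨j - 1, by omega⟩
          rw [bs_refine_gt hrk' j' (by omega) (by omega)] at heq
          have h2 : τ i = e + 2 := hτ.2.2 i j' (by omega) (by omega) heq
          rw [if_neg (by omega)]; omega
    · -- sign computation
      intro ϱ π ϱ' π' hS hS'
      obtain ⟨hmono, hrange, hval⟩ := hS
      obtain ⟨hmono', hrange', hval'⟩ := hS'
      have hrangeNC : ∀ i : Fin (e + l + 1), i ∈ Set.range ϱ ↔ NC dims i := hrange
      have hble' := hble k r hrk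
      have hbk1' := hbk1 k
      set i₀ : Fin (e + l + 1) := ⟨bs dims (k : ℕ) + r - 1, by omega⟩ with hi₀def
      have hi₀ : (i₀ : ℕ) + 1 = bs dims (k : ℕ) + r := by
        simp only [hi₀def]; omega
      have hNCi₀ : NC dims i₀ := by
        intro j hj1 hj2 heq
        have := newcut_ne hd k r hr hrk j hj1 (by omega)
        omega
      obtain ⟨j₀, hj₀⟩ := (hrange i₀).mpr hNCi₀
      have hτi₀ : τ i₀ = e + 1 := hvk i₀ hi₀
      have hπj₀ : π j₀ = Fin.last e := by
        have h1 := hval j₀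
        rw [hj₀, hτi₀] at h1
        apply Fin.ext
        rw [Fin.val_last]
        omega
      have hcount : (j₀ : ℕ) + (k : ℕ) + 1 = bs dims (k : ℕ) + r :=
        rho_count hd k r hr hrk ϱ hmono hrangeNC j₀ (by rw [hj₀]; exact hi₀)
      have hϱ'eq : ϱ' = ϱ ∘ j₀.succAbove := by
        haveI : WellFoundedLT (Fin e) := inferInstance
        refine (StrictMono.range_inj hmono'
          (hmono.comp (Fin.strictMono_succAbove j₀))).mp ?_
        have hr1 : ∀ i : Fin (e + l + 1), i ∈ Set.range ϱ' ↔
            (NC dims i ∧ (i : ℕ) + 1 ≠ bs dims (k : ℕ) + r) := fun i =>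
          (hrange' i).trans (NC_refine_iff hd hr hrk i)
        have hr2 : ∀ i : Fin (e + l + 1), i ∈ Set.range (ϱ ∘ j₀.succAbove) ↔
            (NC dims i ∧ (i : ℕ) + 1 ≠ bs dims (k : ℕ) + r) := by
          intro i
          constructor
          · rintro ⟨t, rfl⟩
            simp only [Function.comp_apply]
            refine ⟨(hrange _).mp ⟨_, rfl⟩, ?_⟩
            intro habs
            have : (ϱ (j₀.succAbove t) : ℕ) = (i₀ : ℕ) := by
              simp only [hi₀def]; omega
            have h2 : ϱ (j₀.succAbove t) = ϱ j₀ := by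
              apply Fin.ext; rw [this, hj₀]
            exact Fin.succAbove_ne j₀ t (hmono.injective h2)
          · rintro ⟨hnc, hne⟩
            obtain ⟨s, hs⟩ := (hrange i).mpr hnc
            have hsne : s ≠ j₀ := by
              intro habs
              rw [habs, hj₀] at hs
              rw [← hs] at hne
              exact hne hi₀
            obtain ⟨t, ht⟩ := Fin.exists_succAbove_eq hsne
            exact ⟨t, by simp only [Function.comp_apply, ht, hs]⟩
        ext i
        rw [hr1 i, ← hr2 i]
      have hπ't : ∀ t : Fin e, (π (j₀.succAbove t) : ℕ) = (π' t : ℕ) := by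
        intro t
        have h1 := hval' t
        rw [hϱ'eq] at h1
        simp only [Function.comp_apply] at h1
        have h2 := hval (j₀.succAbove t)
        have h3 : (π (j₀.succAbove t) : ℕ) ≤ e := by
          have := (π (j₀.succAbove t)).isLt; omega
        rw [if_pos (show τ (ϱ (j₀.succAbove t)) ≤ e + 1 by omega)] at h1
        omega
      have hsign := pi_decomp e π π' j₀ hπj₀ hπ't
      rw [hsign, ← mul_assoc, ← pow_add]
      have hj₀e : (j₀ : ℕ) ≤ e := by have := j₀.isLt; omega
      congr 1
      exact units_pow_parity _ _ (by omega)
  · -- Part 4: surjectivity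
    intro k r hr hrk ψ hψ
    have hrk' : r ≤ dims k := le_of_lt hrk
    have hsum'' : ∑ j, refine dims k r j = (e + l + 1) + 1 := by
      rw [refine_sum hrk', hsum]
    have hd'' := refine_pos hd hr hrk
    have htopψ := fun i => tau_top_iff (L := l + 1) (m := e + l + 1) (d := e)
      hd'' hsum'' (by omega) hψ i
    have hble' := hble k r hrk
    have hbk1' := hbk1 k
    have hψcut : ∀ i : Fin (e + l + 1), (i : ℕ) + 1 = bs dims (k : ℕ) + r →
        ψ i = e + 1 := by
      intro i hi
      exact hψ.2.2 i ((k : ℕ) + 1) (by omega) (by omega)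
        (by rw [bs_refine_mid]; exact hi)
    refine ⟨fun i => if (i : ℕ) + 1 = bs dims (k : ℕ) + r then e + 1
      else (if ψ i = e + 1 then e + 2 else ψ i), ⟨?_, ?_, ?_⟩, ?_⟩
    · intro i
      have := hψ.1 i
      by_cases h1 : (i : ℕ) + 1 = bs dims (k : ℕ) + r
      · simp only [if_pos h1]; omega
      · simp only [if_neg h1]
        by_cases h2 : ψ i = e + 1
        · simp only [if_pos h2]
          omega
        · simp only [if_neg h2]; omega
    · intro v hv1 hv2
      by_cases hv : v = e + 1
      · refine ⟨⟨bs dims (k : ℕ) + r - 1, by omega⟩, ?_⟩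
        have hpos : ((⟨bs dims (k : ℕ) + r - 1, by omega⟩ : Fin (e + l + 1)) : ℕ) + 1 =
            bs dims (k : ℕ) + r := by
          show bs dims (k : ℕ) + r - 1 + 1 = bs dims (k : ℕ) + r
          omega
        simp only [if_pos hpos]
        omega
      · obtain ⟨i, hi⟩ := hψ.2.1 v hv1 (by omega)
        refine ⟨i, ?_⟩
        have h1 : (i : ℕ) + 1 ≠ bs dims (k : ℕ) + r := by
          intro habs
          rw [hψcut i habs] at hi
          omega
        simp only [if_neg h1, if_neg (show ¬ ψ i = e + 1 by omega)]
        exact hi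
    · intro i j hj1 hj2 hj3
      have h1 : (i : ℕ) + 1 ≠ bs dims (k : ℕ) + r := by
        intro habs
        have := newcut_ne hd k r hr hrk j hj1 (by omega)
        omega
      have h2 : ψ i = e + 1 := by
        rcases le_or_gt j (k : ℕ) with hle | hgt
        · exact hψ.2.2 i j hj1 (by omega) (by rw [bs_refine_le j hle]; exact hj3)
        · exact hψ.2.2 i (j + 1) (by omega) (by omega)
            (by rw [bs_refine_gt hrk' j (by omega) (by omega)]; exact hj3)
      simp only [if_neg h1, if_pos h2]
    · funext i
      simp only
      by_cases h1 : (i : ℕ) + 1 = bs dims (k : ℕ) + r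
      · simp only [if_pos h1, if_pos (show e + 1 ≤ e + 1 from le_rfl)]
        exact (hψcut i h1).symm
      · simp only [if_neg h1]
        by_cases h2 : ψ i = e + 1
        · simp only [if_pos h2, if_neg (show ¬ (e + 2 ≤ e + 1) by omega)]
          omega
        · have := hψ.1 i
          simp only [if_neg h2, if_pos (show ψ i ≤ e + 1 by omega)]
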